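/- arXiv:2510.22311 — 5 statements merged into one kernel-verified Lean document; each statement's English description precedes it below -/
import Mathlib

section
/- Let 0 < α < 1/2, let I and J be finite nonempty types, let λ : J → ℝ be nonnegative weights with Σ_{j∈J} λ j = 1, and for each j let c_j : I → ℝ be a nonnegative family with Σ_{i∈I} ((c_j i)²)^α > 0. Define the mixture m : I → ℝ by m i = Σ_{j∈J} λ j · c_j i. Then S^α(m) ≥ Σ_{j∈J} λ j · S^α(c_j), i.e. the OSE is concave for 0 < α < 1/2. -/
/-- Operator Stabilizer Rényi entropy of a family of real Pauli coefficients. -/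
noncomputable def OSE {I : Type*} [Fintype I] (α : ℝ) (c : I → ℝ) : ℝ :=
  (1 / (1 - α)) * Real.log (∑ i, ((c i) ^ 2) ^ α)

/-- Concavity of the OSE for `0 < α < 1/2`. -/
theorem OSE_concave {I J : Type*} [Fintype I] [Fintype J] [Nonempty I] [Nonempty J]
    (α : ℝ) (hα0 : 0 < α) (hα : α < 1 / 2)
    (lam : J → ℝ) (hlam : ∀ j, 0 ≤ lam j) (hsum : ∑ j, lam j = 1)
    (c : J → I → ℝ) (hc : ∀ j i, 0 ≤ c j i)
    (hpos : ∀ j, 0 < ∑ i, ((c j i) ^ 2) ^ α) :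
    ∑ j, lam j * OSE α (c j) ≤ OSE α (fun i => ∑ j, lam j * c j i) := by
  set p : ℝ := 2 * α with hp
  have hp0 : 0 < p := by positivity
  have hp1 : p < 1 := by rw [hp]; linarith
  have hsq : ∀ x : ℝ, 0 ≤ x → ((x ^ 2 : ℝ)) ^ α = x ^ p := by
    intro x hx
    rw [← Real.rpow_natCast x 2, ← Real.rpow_mul hx]
    norm_num [hp, mul_comm]
  set A : J → ℝ := fun j => ∑ i, ((c j i) ^ 2) ^ α with hA
  -- step 1: pointwise Jensen for x ↦ x ^ p
  have step1 : ∑ j, lam j * A j ≤ ∑ i, (((∑ j, lam j * c j i) ^ 2 : ℝ)) ^ α := by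
    have swap : ∑ j, lam j * A j = ∑ i, ∑ j, lam j * ((c j i ^ 2) ^ α) := by
      simp only [hA, Finset.mul_sum]
      exact Finset.sum_comm
    rw [swap]
    apply Finset.sum_le_sum
    intro i _
    have hmi : 0 ≤ ∑ j, lam j * c j i :=
      Finset.sum_nonneg fun j _ => mul_nonneg (hlam j) (hc j i)
    rw [hsq _ hmi]
    have := (Real.concaveOn_rpow hp0.le hp1.le).le_map_sum
      (t := Finset.univ) (w := lam) (p := fun j => c j i)
      (fun j _ => hlam j) hsum (fun j _ => hc j i)
    simp only [smul_eq_mul] at this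
    refine le_trans (le_of_eq ?_) this
    apply Finset.sum_congr rfl
    intro j _
    rw [hsq _ (hc j i)]
  have hApos : ∀ j, 0 < A j := hpos
  have hmix_pos : 0 < ∑ j, lam j * A j := by
    have : (0:ℝ) < ∑ j, lam j * A j ∨ ∑ j, lam j * A j = 0 ∨ False := by
      rcases (Finset.sum_nonneg (fun j _ => mul_nonneg (hlam j) (hApos j).le)).lt_or_eq
        with h | h
      · exact Or.inl h
      · exact Or.inr (Or.inl h.symm)
    rcases this with h | h | h
    · exact h
    · exfalso
      have hz : ∀ j ∈ Finset.univ, lam j * A j = 0 :=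
        (Finset.sum_eq_zero_iff_of_nonneg
          (fun j _ => mul_nonneg (hlam j) (hApos j).le)).1 h
      have : ∑ j, lam j = 0 := by
        apply Finset.sum_eq_zero
        intro j hj
        have := hz j hj
        rcases mul_eq_zero.1 this with h | h
        · exact h
        · exact absurd h (hApos j).ne'
      rw [hsum] at this; norm_num at this
    · exact h.elim
  -- step 2: Jensen for log
  have step2 : ∑ j, lam j * Real.log (A j) ≤ Real.log (∑ j, lam j * A j) := by
    have := strictConcaveOn_log_Ioi.concaveOn.le_map_sum
      (t := Finset.univ) (w := lam) (p := A)
      (fun j _ => hlam j) hsum (fun j _ => hApos j)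
    simpa using this
  have hlog : ∑ j, lam j * Real.log (A j)
      ≤ Real.log (∑ i, (((∑ j, lam j * c j i) ^ 2 : ℝ)) ^ α) :=
    step2.trans (Real.log_le_log hmix_pos step1)
  have hcoef : (0:ℝ) < 1 / (1 - α) := by
    have : (0:ℝ) < 1 - α := by linarith
    positivity
  unfold OSE
  calc ∑ j, lam j * ((1 / (1 - α)) * Real.log (A j))
      = (1 / (1 - α)) * ∑ j, lam j * Real.log (A j) := by
        rw [Finset.mul_sum]; apply Finset.sum_congr rfl; intro j _; ring
    _ ≤ (1 / (1 - α)) * Real.log (∑ i, (((∑ j, lam j * c j i) ^ 2 : ℝ)) ^ α) :=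
        mul_le_mul_of_nonneg_left hlog hcoef.le
end

section
/- Let 1/2 ≤ α < 1, let I and J be finite types, let λ : J → ℝ be nonnegative weights with Σ_{j∈J} λ j = 1, and for each j let c_j : I → ℝ. Then (Σ_{i∈I} |Σ_{j∈J} λ j · c_j i|^{2α})^{1/(1−α)} ≤ Σ_{j∈J} λ j · (Σ_{i∈I} |c_j i|^{2α})^{1/(1−α)}. Equivalently, exp(S^α(·)) is a convex function of the coefficient family for 1/2 ≤ α < 1. -/
open Set

lemma norm_rpow_convexOn {E : Type*} [SeminormedAddCommGroup E] [NormedSpace ℝ E]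
    {q : ℝ} (hq : 1 ≤ q) : ConvexOn ℝ Set.univ (fun x : E => ‖x‖ ^ q) := by
  refine ⟨convex_univ, fun x _ y _ a b ha hb hab => ?_⟩
  have hq0 : 0 ≤ q := le_trans zero_le_one hq
  have h1 : ‖a • x + b • y‖ ^ q ≤ (a * ‖x‖ + b * ‖y‖) ^ q := by
    apply Real.rpow_le_rpow (norm_nonneg _) _ hq0
    calc ‖a • x + b • y‖ ≤ ‖a • x‖ + ‖b • y‖ := norm_add_le _ _
      _ = a * ‖x‖ + b * ‖y‖ := by
          rw [norm_smul, norm_smul, Real.norm_eq_abs, Real.norm_eq_abs,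
            abs_of_nonneg ha, abs_of_nonneg hb]
  have h2 := (convexOn_rpow hq).2 (mem_Ici.2 (norm_nonneg x)) (mem_Ici.2 (norm_nonneg y))
    ha hb hab
  simp only [smul_eq_mul] at h2 ⊢
  exact h1.trans h2

/-- Convexity of `exp (Sᵅ (·))` for `1/2 ≤ α < 1`: the quantity
`(∑ i, |c i| ^ (2α)) ^ (1/(1-α)) = exp (Sᵅ c)` is convex in the coefficient family. -/
theorem exp_OSE_convex {I J : Type*} [Fintype I] [Fintype J]
    (α : ℝ) (hα0 : 1 / 2 ≤ α) (hα1 : α < 1)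
    (lam : J → ℝ) (hlam : ∀ j, 0 ≤ lam j) (hsum : ∑ j, lam j = 1)
    (c : J → I → ℝ) :
    (∑ i, |∑ j, lam j * c j i| ^ (2 * α)) ^ (1 / (1 - α)) ≤
      ∑ j, lam j * (∑ i, |c j i| ^ (2 * α)) ^ (1 / (1 - α)) := by
  have hp1 : (1 : ℝ) ≤ 2 * α := by linarith
  have hp0 : (0 : ℝ) < 2 * α := by linarith
  have h1α : (0 : ℝ) < 1 - α := by linarith
  set p : ENNReal := ENNReal.ofReal (2 * α) with hp
  haveI : Fact (1 ≤ p) := ⟨by rwa [hp, ENNReal.one_le_ofReal]⟩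
  have hptr : p.toReal = 2 * α := ENNReal.toReal_ofReal hp0.le
  set q : ℝ := 2 * α / (1 - α) with hq
  have hq1 : 1 ≤ q := by
    rw [hq, le_div_iff₀ h1α]; linarith
  -- the key identity: for any `x : PiLp p (fun _ : I => ℝ)`,
  have key : ∀ x : PiLp p (fun _ : I => ℝ),
      ‖x‖ ^ q = (∑ i, |x i| ^ (2 * α)) ^ (1 / (1 - α)) := by
    intro x
    rw [PiLp.norm_eq_sum (by rw [hptr]; exact hp0) x]
    simp only [hptr, Real.norm_eq_abs]
    rw [← Real.rpow_mul (Finset.sum_nonneg fun i _ =>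
      Real.rpow_nonneg (abs_nonneg _) _)]
    congr 1
    have h2 : (2*α) ≠ 0 := hp0.ne'
    have h3 : (1-α) ≠ 0 := h1α.ne'
    rw [hq, one_div, ← mul_div_assoc, inv_mul_cancel₀ h2]
  have hconv := norm_rpow_convexOn (E := PiLp p (fun _ : I => ℝ)) hq1
  have hJ := hconv.map_sum_le (t := Finset.univ)
    (w := lam) (p := fun j => (WithLp.equiv p _).symm (c j))
    (fun j _ => hlam j) hsum (fun j _ => mem_univ _)
  have hxi : ∀ i, (∑ j, lam j • (WithLp.equiv p (∀ _ : I, ℝ)).symm (c j)) i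
      = ∑ j, lam j * c j i := by
    intro i
    induction (Finset.univ : Finset J) using Finset.cons_induction with
    | empty => simp
    | cons j t hj ih =>
        rw [Finset.sum_cons, Finset.sum_cons, ← ih]
        rfl
  rw [key] at hJ
  try simp_rw [key] at hJ
  calc (∑ i, |∑ j, lam j * c j i| ^ (2 * α)) ^ (1 / (1 - α))
      = (∑ i, |(∑ j, lam j • (WithLp.equiv p (∀ _ : I, ℝ)).symm (c j)) i| ^ (2 * α)) ^
        (1 / (1 - α)) := by
        congr 1; exact Finset.sum_congr rfl fun i _ => by rw [hxi i]
    _ ≤ ∑ j, lam j * (∑ i, |c j i| ^ (2 * α)) ^ (1 / (1 - α)) := by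
        simpa [WithLp.equiv_symm_apply, PiLp.toLp_apply, smul_eq_mul] using hJ
end

section
/- Let E be a real inner product space, I a finite type, (e_i)_{i∈I} an orthonormal family in E, and c : I → ℝ. Set O = Σ_{i∈I} c_i • e_i. Let T ⊆ I be a subset with a := Σ_{i∈T} c_i² > 0, and define the rescaled truncation Ô = (‖O‖ / √a) • Σ_{i∈T} c_i • e_i. Then ‖O − Ô‖ ≤ √(2 · Σ_{i∉T} c_i²). In particular, when T consists of the K coefficients of largest magnitude, the truncation error is at most √(2·Δ(K)) where Δ(K) is the squared sum of the discarded (tail) coefficients. -/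
/-- Top-`K` truncation error bound: if `O = ∑ i, c i • e i` in an orthonormal family and
`Ô` is the rescaled truncation onto a subset `T` of coefficients, then
`‖O - Ô‖ ≤ √(2 · Σ_{i ∉ T} (c i)²)`. -/
theorem truncation_error_bound {E : Type*} [NormedAddCommGroup E] [InnerProductSpace ℝ E]
    {I : Type*} [Fintype I] [DecidableEq I]
    (e : I → E) (he : Orthonormal ℝ e) (c : I → ℝ) (T : Finset I)
    (ha : 0 < ∑ i ∈ T, (c i) ^ 2) :
    ‖(∑ i, c i • e i) -
        (‖∑ i, c i • e i‖ / Real.sqrt (∑ i ∈ T, (c i) ^ 2)) • ∑ i ∈ T, c i • e i‖ ≤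
      Real.sqrt (2 * ∑ i ∈ Tᶜ, (c i) ^ 2) := by
  set a : ℝ := ∑ i ∈ T, (c i) ^ 2 with ha_def
  set b : ℝ := ∑ i ∈ Tᶜ, (c i) ^ 2 with hb_def
  set O : E := ∑ i, c i • e i with hO_def
  set t : ℝ := ‖O‖ / Real.sqrt a with ht_def
  have hb0 : 0 ≤ b := Finset.sum_nonneg fun i _ => sq_nonneg _
  -- coefficient function of O - Ô
  set d : I → ℝ := fun i => c i - (if i ∈ T then t * c i else 0) with hd_def
  have hdiff : O - t • ∑ i ∈ T, c i • e i = ∑ i, d i • e i := by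
    rw [Finset.smul_sum]
    have h1 : (∑ i ∈ T, t • (c i • e i)) = ∑ i, (if i ∈ T then t * c i else 0) • e i := by
      symm
      calc ∑ i, (if i ∈ T then t * c i else 0) • e i
          = ∑ i, (if i ∈ T then t • (c i • e i) else 0) := by
            refine Finset.sum_congr rfl fun i _ => ?_
            split_ifs with h
            · rw [smul_smul]
            · simp
        _ = ∑ i ∈ T, t • (c i • e i) := by
            rw [Finset.sum_ite_mem, Finset.univ_inter]
    rw [h1, ← Finset.sum_sub_distrib]
    refine Finset.sum_congr rfl fun i _ => ?_
    rw [hd_def, sub_smul]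
  have hnormO : ‖O‖ ^ 2 = a + b := by
    have := he.inner_sum c c Finset.univ
    simp only [RCLike.conj_to_real, starRingEnd_apply, star_trivial] at this
    rw [hO_def, ← real_inner_self_eq_norm_sq, this]
    rw [← Finset.sum_add_sum_compl T fun i => c i * c i]
    simp [ha_def, hb_def, sq]
  have hnormd : ‖O - t • ∑ i ∈ T, c i • e i‖ ^ 2 = ∑ i, (d i) ^ 2 := by
    rw [hdiff]
    have := he.inner_sum d d Finset.univ
    simp only [starRingEnd_apply, star_trivial] at this
    rw [← real_inner_self_eq_norm_sq, this]
    simp [sq]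
  have hsum_d : ∑ i, (d i) ^ 2 = (1 - t) ^ 2 * a + b := by
    rw [← Finset.sum_add_sum_compl T fun i => (d i) ^ 2]
    congr 1
    · rw [Finset.mul_sum]
      refine Finset.sum_congr rfl fun i hi => ?_
      simp only [hd_def, if_pos hi]
      ring
    · refine Finset.sum_congr rfl fun i hi => ?_
      simp only [hd_def, if_neg (Finset.mem_compl.mp hi), sub_zero]
  -- key scalar inequality
  set s : ℝ := Real.sqrt a with hs_def
  have hs0 : 0 < s := Real.sqrt_pos.mpr ha
  have hs2 : s ^ 2 = a := Real.sq_sqrt ha.le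
  have hr0 : 0 ≤ ‖O‖ := norm_nonneg _
  have hsr : s ≤ ‖O‖ := by
    have h1 : s ^ 2 ≤ ‖O‖ ^ 2 := by rw [hs2, hnormO]; linarith
    nlinarith
  have hkey : (1 - t) ^ 2 * a + b ≤ 2 * b := by
    have ht : (1 - t) ^ 2 * a = (s - ‖O‖) ^ 2 := by
      rw [ht_def, ← hs2]
      field_simp
    rw [ht]
    nlinarith [hnormO, hs2]
  have hfinal : ‖O - t • ∑ i ∈ T, c i • e i‖ ^ 2 ≤ 2 * b := by
    rw [hnormd, hsum_d]; exact hkey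
  calc ‖O - t • ∑ i ∈ T, c i • e i‖
      = Real.sqrt (‖O - t • ∑ i ∈ T, c i • e i‖ ^ 2) := (Real.sqrt_sq (norm_nonneg _)).symm
    _ ≤ Real.sqrt (2 * b) := Real.sqrt_le_sqrt hfinal
end

section
/- Let 0 < α < 1 and let c : ℕ → ℝ be such that the squared sequence is nonincreasing ((c (i+1))² ≤ (c i)² for all i), Σ'_i ((c i)²)^α < ∞ (summable), and Σ'_i (c i)² < ∞ (summable). Then for every natural number K ≥ 1, the tail satisfies Σ'_{i : ℕ} (c (K + i))² ≤ (α/(1−α)) · K^{−(1−α)/α} · (Σ'_{i} ((c i)²)^α)^{1/α}. -/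
open Real Finset

-- Bernoulli consequence: for x ≥ 1, r > 0:  r * (x+1)^(-(r+1)) ≤ x^(-r) - (x+1)^(-r)
lemma tele_step {x r : ℝ} (hx : 1 ≤ x) (hr : 0 < r) :
    r * (x + 1) ^ (-(r + 1)) ≤ x ^ (-r) - (x + 1) ^ (-r) := by
  have hx0 : (0:ℝ) < x := lt_of_lt_of_le one_pos hx
  have hx1 : (0:ℝ) < x + 1 := by linarith
  -- Bernoulli: (1 + 1/x)^(r+1) ≥ 1 + (r+1)/x
  have hb := one_add_mul_self_le_rpow_one_add (s := 1/x)
      (le_trans (by norm_num) (by positivity : (0:ℝ) ≤ 1/x)) (p := r + 1) (by linarith)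
  have hmul : (1 + 1/x) ^ (r+1) * x ^ (r+1) = (x+1) ^ (r+1) := by
    rw [← Real.mul_rpow (by positivity) hx0.le]
    congr 1
    field_simp
  -- key: x^r * (x + 1 + r) ≤ (x+1)^(r+1)
  have hxr : x ^ (r + 1) = x ^ r * x := by
    rw [Real.rpow_add hx0, Real.rpow_one]
  have key : x ^ r * (x + 1 + r) ≤ (x + 1) ^ (r + 1) := by
    have h2 : (1 + (r+1) * (1/x)) * x ^ (r+1) ≤ (x+1) ^ (r+1) := by
      rw [← hmul]
      have : (0:ℝ) ≤ x ^ (r+1) := (Real.rpow_pos_of_pos hx0 _).le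
      nlinarith [hb, this]
    calc x ^ r * (x + 1 + r) = (1 + (r+1) * (1/x)) * x ^ (r+1) := by
          rw [hxr]; field_simp; ring
      _ ≤ (x+1) ^ (r+1) := h2
  have hA : (0:ℝ) < x ^ r := Real.rpow_pos_of_pos hx0 _
  have hB : (0:ℝ) < (x+1) ^ r := Real.rpow_pos_of_pos hx1 _
  have hC : (0:ℝ) < (x+1) ^ (r+1) := Real.rpow_pos_of_pos hx1 _
  have hCeq : (x+1) ^ (r+1) = (x+1) ^ r * (x+1) := by
    rw [Real.rpow_add hx1, Real.rpow_one]
  rw [Real.rpow_neg hx0.le, Real.rpow_neg hx1.le, Real.rpow_neg hx1.le]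
  rw [inv_eq_one_div, inv_eq_one_div, inv_eq_one_div,
    div_sub_div _ _ hA.ne' hB.ne', mul_one_div, div_le_div_iff₀ hC (by positivity)]
  rw [hCeq] at key ⊢
  nlinarith [key, hA, hB, mul_le_mul_of_nonneg_right key hB.le]



/-- Tail bound for Top-`K` truncation:
`Δ(K) ≤ (α/(1-α)) · K^{-(1-α)/α} · (∑ ((c i)²)^α)^{1/α}`. -/
theorem tail_le_entropy_bound (α : ℝ) (hα0 : 0 < α) (hα1 : α < 1)
    (c : ℕ → ℝ) (hmono : ∀ i, (c (i + 1)) ^ 2 ≤ (c i) ^ 2)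
    (hsumα : Summable fun i => ((c i) ^ 2) ^ α)
    (hsum : Summable fun i => (c i) ^ 2)
    (K : ℕ) (hK : 1 ≤ K) :
    (∑' i, (c (K + i)) ^ 2) ≤
      (α / (1 - α)) * (K : ℝ) ^ (-(1 - α) / α) * (∑' i, ((c i) ^ 2) ^ α) ^ (1 / α) := by
  set S : ℝ := ∑' i, ((c i) ^ 2) ^ α with hS
  set r : ℝ := (1 - α) / α with hr
  have hrpos : 0 < r := div_pos (by linarith) hα0
  have hrp1 : r + 1 = 1 / α := by field_simp [hr]; rw [hr, add_mul, div_mul_cancel₀ _ hα0.ne']; ring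
  have hb_nonneg : ∀ k, 0 ≤ ((c k) ^ 2) ^ α := fun k =>
    Real.rpow_nonneg (sq_nonneg _) _
  have hS0 : 0 ≤ S := tsum_nonneg hb_nonneg
  -- b antitone
  have hbmono : ∀ j k, j ≤ k → ((c k) ^ 2) ^ α ≤ ((c j) ^ 2) ^ α := by
    intro j k hjk
    exact Real.rpow_le_rpow (sq_nonneg _)
      ((antitone_nat_of_succ_le (f := fun i => (c i)^2) (fun i => hmono i)) hjk) hα0.le
  -- per index bound: (j+1) * b j ≤ S
  have hkey : ∀ j : ℕ, ((j : ℝ) + 1) * ((c j) ^ 2) ^ α ≤ S := by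
    intro j
    calc ((j : ℝ) + 1) * ((c j) ^ 2) ^ α
        = ∑ k ∈ Finset.range (j + 1), ((c j) ^ 2) ^ α := by
          rw [Finset.sum_const, Finset.card_range]; push_cast; ring
      _ ≤ ∑ k ∈ Finset.range (j + 1), ((c k) ^ 2) ^ α :=
          Finset.sum_le_sum fun k hk => hbmono k j
            (Nat.lt_succ_iff.mp (Finset.mem_range.mp hk))
      _ ≤ S := Summable.sum_le_tsum _ (fun k _ => hb_nonneg k) hsumα
  -- pointwise: (c j)^2 ≤ S^(1/α) * (j+1)^(-(1/α))
  have hpt : ∀ j : ℕ, (c j) ^ 2 ≤ S ^ (1/α) * ((j : ℝ) + 1) ^ (-(1/α)) := by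
    intro j
    have hj1 : (0:ℝ) < (j : ℝ) + 1 := by positivity
    have h1 : ((c j) ^ 2) ^ α ≤ S / ((j : ℝ) + 1) := by
      rw [le_div_iff₀ hj1]; linarith [hkey j]
    have h2 : (((c j) ^ 2) ^ α) ^ (1/α) ≤ (S / ((j : ℝ) + 1)) ^ (1/α) :=
      Real.rpow_le_rpow (hb_nonneg j) h1 (by positivity)
    have h3 : (((c j) ^ 2) ^ α) ^ (1/α) = (c j) ^ 2 := by
      rw [← Real.rpow_mul (sq_nonneg _), mul_one_div, div_self hα0.ne', Real.rpow_one]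
    rw [h3, Real.div_rpow hS0 hj1.le] at h2
    rw [Real.rpow_neg hj1.le, ← div_eq_mul_inv]
    exact h2
  -- telescoping partial sums
  have g : ℕ → ℝ := fun i => ((K + i : ℕ) : ℝ) ^ (-r)
  have htele : ∀ n : ℕ, ∑ i ∈ Finset.range n, ((K + i : ℝ) + 1) ^ (-(1/α)) ≤
      (K : ℝ) ^ (-r) / r := by
    intro n
    rw [le_div_iff₀ hrpos, Finset.sum_mul]
    calc ∑ i ∈ Finset.range n, ((K + i : ℝ) + 1) ^ (-(1/α)) * r
        ≤ ∑ i ∈ Finset.range n,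
            (((K + i : ℕ) : ℝ) ^ (-r) - ((K + (i+1) : ℕ) : ℝ) ^ (-r)) := by
          apply Finset.sum_le_sum
          intro i _
          rw [mul_comm]
          have h := tele_step (x := (K + i : ℝ)) (r := r)
            (by exact_mod_cast le_add_of_le_of_nonneg (by exact_mod_cast hK) (by positivity)) hrpos
          rw [hrp1] at h
          convert h using 3
          · rfl
          all_goals (push_cast; ring)
      _ = ((K + 0 : ℕ) : ℝ) ^ (-r) - ((K + n : ℕ) : ℝ) ^ (-r) :=
          Finset.sum_range_sub' (fun i => ((K + i : ℕ) : ℝ) ^ (-r)) n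
      _ ≤ (K : ℝ) ^ (-r) := by
          simp only [Nat.add_zero]
          have : 0 ≤ ((K + n : ℕ) : ℝ) ^ (-r) := Real.rpow_nonneg (by positivity) _
          linarith
  -- main bound via partial sums
  have hmain : (∑' i, (c (K + i)) ^ 2) ≤ S ^ (1/α) * ((K : ℝ) ^ (-r) / r) := by
    apply Real.tsum_le_of_sum_range_le (fun i => sq_nonneg _)
    intro n
    calc ∑ i ∈ Finset.range n, (c (K + i)) ^ 2
        ≤ ∑ i ∈ Finset.range n, S ^ (1/α) * ((K + i : ℝ) + 1) ^ (-(1/α)) := by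
          apply Finset.sum_le_sum
          intro i _
          have := hpt (K + i)
          push_cast at this ⊢
          linarith
      _ = S ^ (1/α) * ∑ i ∈ Finset.range n, ((K + i : ℝ) + 1) ^ (-(1/α)) := by
          rw [Finset.mul_sum]
      _ ≤ S ^ (1/α) * ((K : ℝ) ^ (-r) / r) := by
          apply mul_le_mul_of_nonneg_left (htele n) (Real.rpow_nonneg hS0 _)
  calc (∑' i, (c (K + i)) ^ 2) ≤ S ^ (1/α) * ((K : ℝ) ^ (-r) / r) := hmain
    _ = (α / (1 - α)) * (K : ℝ) ^ (-(1 - α) / α) * S ^ (1 / α) := by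
        rw [neg_div]
        rw [show α / (1 - α) = 1 / r by rw [hr]; field_simp]
        ring
end

section
/- Let m be a natural number, let A, B be m × m complex matrices with A * A = 1, and let θ be a real number. (i) If A * B = B * A, then exp((Complex.I * θ) • A) * B * exp((−Complex.I * θ) • A) = B. (ii) If A * B = −(B * A), then exp((Complex.I * θ) • A) * B * exp((−Complex.I * θ) • A) = (cos(2θ) : ℂ) • B − (Complex.I * sin(2θ)) • (B * A), which equals cos(2θ) • B + (Complex.I * sin(2θ)) • (A * B). (This is the closed-form conjugation rule for a Pauli rotation exp(−i w P τ) acting on a Pauli word, with θ = w τ.) -/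
open Matrix

lemma exp_smul_involution {m : ℕ} (A : Matrix (Fin m) (Fin m) ℂ)
    (hA : A * A = 1) (z : ℂ) :
    NormedSpace.exp (z • A) = Complex.cosh z • (1 : Matrix (Fin m) (Fin m) ℂ)
      + Complex.sinh z • A := by
  have hA2 : A ^ 2 = 1 := by rw [sq, hA]
  rw [NormedSpace.exp_eq_tsum (𝕂 := ℂ)]
  refine HasSum.tsum_eq ?_
  refine HasSum.even_add_odd ?_ ?_
  · have h := (Complex.hasSum_cosh z).smul_const (1 : Matrix (Fin m) (Fin m) ℂ)
    convert h using 2 with k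
    · rfl
    rw [smul_pow, pow_mul A, hA2, one_pow, smul_smul, inv_mul_eq_div]
  · have h := (Complex.hasSum_sinh z).smul_const A
    convert h using 2 with k
    · rfl
    rw [smul_pow, pow_succ A, pow_mul A, hA2, one_pow, one_mul, smul_smul, inv_mul_eq_div]

/-- Closed-form conjugation rule for a Pauli rotation `exp(i θ A)` acting on `B`,
where `A² = 1` and `A` either commutes or anticommutes with `B`. -/
theorem pauli_rotation_conjugation (m : ℕ) (A B : Matrix (Fin m) (Fin m) ℂ)
    (hA : A * A = 1) (θ : ℝ) :
    (A * B = B * A →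
      NormedSpace.exp ((Complex.I * (θ : ℂ)) • A) * B *
          NormedSpace.exp ((-(Complex.I * (θ : ℂ))) • A) = B) ∧
    (A * B = -(B * A) →
      NormedSpace.exp ((Complex.I * (θ : ℂ)) • A) * B *
          NormedSpace.exp ((-(Complex.I * (θ : ℂ))) • A) =
        ((Real.cos (2 * θ) : ℂ)) • B - (Complex.I * (Real.sin (2 * θ) : ℂ)) • (B * A) ∧
      NormedSpace.exp ((Complex.I * (θ : ℂ)) • A) * B *
          NormedSpace.exp ((-(Complex.I * (θ : ℂ))) • A) =
        ((Real.cos (2 * θ) : ℂ)) • B + (Complex.I * (Real.sin (2 * θ) : ℂ)) • (A * B)) := by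
  have hE : ∀ z : ℂ, NormedSpace.exp (z • A)
      = Complex.cosh z • (1 : Matrix (Fin m) (Fin m) ℂ) + Complex.sinh z • A :=
    exp_smul_involution A hA
  set x : ℂ := Complex.I * (θ : ℂ) with hx
  have hEE : NormedSpace.exp (x • A) * NormedSpace.exp ((-x) • A) = 1 := by
    have h := Matrix.exp_add_of_commute (x • A) (-(x • A)) ((Commute.refl (x • A)).neg_right)
    rw [add_neg_cancel, NormedSpace.exp_zero] at h
    rw [neg_smul]
    exact h.symm
  constructor
  · intro hAB
    have hc : Commute (x • A) B := by
      show x • A * B = B * (x • A)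
      rw [Matrix.smul_mul, Matrix.mul_smul, hAB]
    have hc' : Commute (NormedSpace.exp (x • A)) B := (hc.symm.exp_right).symm
    rw [hc'.eq, mul_assoc, hEE, mul_one]
  · intro hAB
    have hcosh : Complex.cosh x = (Real.cos θ : ℂ) := by
      rw [hx, mul_comm, Complex.cosh_mul_I, Complex.ofReal_cos]
    have hsinh : Complex.sinh x = (Real.sin θ : ℂ) * Complex.I := by
      rw [hx, mul_comm, Complex.sinh_mul_I, Complex.ofReal_sin]
    have hABA : A * B * A = -B := by
      rw [hAB, Matrix.neg_mul, mul_assoc, hA, mul_one]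
    set c : ℂ := (Real.cos θ : ℂ) with hcdef
    set s : ℂ := (Real.sin θ : ℂ) with hsdef
    have hc2 : (Real.cos (2 * θ) : ℂ) = c * c - s * s := by
      rw [hcdef, hsdef]; push_cast [Real.cos_two_mul']; ring
    have hs2 : (Real.sin (2 * θ) : ℂ) = 2 * s * c := by
      rw [hsdef, hcdef]; push_cast [Real.sin_two_mul]; ring
    have key : NormedSpace.exp (x • A) * B * NormedSpace.exp ((-x) • A) =
        ((Real.cos (2 * θ) : ℂ)) • B - (Complex.I * (Real.sin (2 * θ) : ℂ)) • (B * A) := by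
      rw [hE x, hE (-x), Complex.cosh_neg, Complex.sinh_neg, hcosh, hsinh, hc2, hs2]
      simp only [Matrix.add_mul, Matrix.mul_add, Matrix.smul_mul, Matrix.mul_smul,
        Matrix.one_mul, Matrix.mul_one, smul_smul, neg_smul, smul_neg, mul_neg, neg_neg]
      rw [show A * B * A = -B from hABA, show A * B = -(B * A) from hAB]
      have hI : Complex.I * Complex.I = -1 := Complex.I_mul_I
      match_scalars <;> ring_nf <;> rw [Complex.I_sq] <;> ring
    refine ⟨key, ?_⟩
    rw [key, hAB, smul_neg, ← sub_eq_add_neg]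
end
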